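/- Let A = AddMonoidAlgebra ℂ (Fin r → ℤ) be the ring of Laurent polynomials in r variables over ℂ, with basis elements e^λ for λ ∈ ℤ^r, and for i = 1, …, r let ∂_i : A → A be the ℂ-linear map determined by ∂_i(e^λ) = λ_i · e^λ (the invariant derivation x_i ∂/∂x_i). Then for f ∈ A the following are equivalent: (a) the coefficient of f at λ = 0 (the constant term) is zero; (b) there exist g₁, …, g_r ∈ A with f = Σ_{i=1}^r ∂_i(g_i). (The algebraic content of the Lemma in Section 6 computing the top De Rham cohomology: the exact top forms f·ω are exactly those with vanishing constant term, and the residue of f is its constant term.) -/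

import Mathlib

/-- **Top De Rham cohomology of the torus (Section 6).** Let `A = ℂ[x₁^{±1},…,x_r^{±1}]`
be the Laurent polynomial ring, realized as `AddMonoidAlgebra ℂ (ℤ^r)`, and for each `i`
let `∂ᵢ` be the ℂ-linear map determined by `∂ᵢ(e^λ) = λᵢ e^λ` (i.e. `xᵢ ∂/∂xᵢ`). Then a
Laurent polynomial `f` has zero constant term (coefficient at `λ = 0`) if and only if
`f = Σᵢ ∂ᵢ(gᵢ)` for some `g₁,…,g_r ∈ A`. -/
theorem stmt17 (r : ℕ)
    (D : Fin r → (AddMonoidAlgebra ℂ (Fin r → ℤ) →ₗ[ℂ] AddMonoidAlgebra ℂ (Fin r → ℤ)))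
    (hD : ∀ (i : Fin r) (lam : Fin r → ℤ),
      D i (AddMonoidAlgebra.single lam 1) = (lam i : ℂ) • AddMonoidAlgebra.single lam 1)
    (f : AddMonoidAlgebra ℂ (Fin r → ℤ)) :
    f.coeff 0 = 0 ↔ ∃ g : Fin r → AddMonoidAlgebra ℂ (Fin r → ℤ), f = ∑ i, D i (g i) := by
  classical
  have hD' : ∀ (i : Fin r) (lam : Fin r → ℤ),
      D i (AddMonoidAlgebra.single lam 1) = (lam i : ℂ) • AddMonoidAlgebra.single lam 1 := hD
  have hsingle : ∀ (lam : Fin r → ℤ) (c : ℂ),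
      (AddMonoidAlgebra.single lam c : AddMonoidAlgebra ℂ (Fin r → ℤ))
        = c • AddMonoidAlgebra.single lam (1 : ℂ) := by
    intro lam c
    rw [AddMonoidAlgebra.smul_single', mul_one]
  constructor
  · intro hf
    -- Every single with nonzero exponent is a sum of derivatives.
    have key : ∀ lam : Fin r → ℤ, lam ≠ 0 → ∀ c : ℂ,
        ∃ g : Fin r → AddMonoidAlgebra ℂ (Fin r → ℤ),
          (AddMonoidAlgebra.single lam c : AddMonoidAlgebra ℂ (Fin r → ℤ)) = ∑ i, D i (g i) := by
      intro lam hlam c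
      obtain ⟨i, hi⟩ : ∃ i, lam i ≠ 0 := by
        by_contra h
        push_neg at h
        exact hlam (funext h)
      have hne : (lam i : ℂ) ≠ 0 := by exact_mod_cast hi
      refine ⟨fun j => if j = i then AddMonoidAlgebra.single lam (c / (lam i : ℂ)) else 0, ?_⟩
      rw [Finset.sum_eq_single i]
      · show (AddMonoidAlgebra.single lam c : AddMonoidAlgebra ℂ (Fin r → ℤ))
            = D i (if i = i then AddMonoidAlgebra.single lam (c / (lam i : ℂ)) else 0)
        rw [if_pos rfl, hsingle lam (c / (lam i : ℂ)), map_smul, hD', smul_smul,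
          div_mul_cancel₀ c hne, ← hsingle]
      · intro j _ hj
        simp [hj]
      · simp
    have hf0 : (0 : Fin r → ℤ) ∉ f.coeff.support := by
      simp [Finsupp.mem_support_iff, hf]
    set G : (Fin r → ℤ) → (Fin r → AddMonoidAlgebra ℂ (Fin r → ℤ)) :=
      fun lam => if h : lam ≠ 0 then (key lam h (f.coeff lam)).choose else 0 with hG
    have hGspec : ∀ lam ∈ f.coeff.support,
        (AddMonoidAlgebra.single lam (f.coeff lam) : AddMonoidAlgebra ℂ (Fin r → ℤ))
          = ∑ i, D i (G lam i) := by
      intro lam hlam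
      have h : lam ≠ 0 := by rintro rfl; exact hf0 hlam
      simp only [hG, dif_pos h]
      exact (key lam h (f.coeff lam)).choose_spec
    refine ⟨fun i => ∑ lam ∈ f.coeff.support, G lam i, ?_⟩
    have hrepr : f = ∑ lam ∈ f.coeff.support, AddMonoidAlgebra.single lam (f.coeff lam) :=
      (AddMonoidAlgebra.sum_coeff_single f).symm
    calc f = ∑ lam ∈ f.coeff.support, AddMonoidAlgebra.single lam (f.coeff lam) := hrepr
      _ = ∑ lam ∈ f.coeff.support, ∑ i, D i (G lam i) :=
          Finset.sum_congr rfl hGspec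
      _ = ∑ i, ∑ lam ∈ f.coeff.support, D i (G lam i) := Finset.sum_comm
      _ = ∑ i, D i (∑ lam ∈ f.coeff.support, G lam i) := by
          refine Finset.sum_congr rfl fun i _ => ?_
          rw [map_sum]
  · rintro ⟨g, rfl⟩
    have hD0 : ∀ (i : Fin r) (h : AddMonoidAlgebra ℂ (Fin r → ℤ)), (D i h).coeff 0 = 0 := by
      intro i h
      conv_lhs => rw [← AddMonoidAlgebra.sum_coeff_single h]
      rw [Finsupp.sum, map_sum, AddMonoidAlgebra.coeff_sum, Finsupp.finset_sum_apply]
      apply Finset.sum_eq_zero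
      intro lam _
      rw [hsingle, map_smul, hD']
      rw [AddMonoidAlgebra.coeff_smul_apply, AddMonoidAlgebra.coeff_smul_apply,
        AddMonoidAlgebra.coeff_single, Finsupp.single_apply]
      rcases eq_or_ne lam 0 with hl | hl
      · subst hl
        simp
      · rw [if_neg hl]
        simp
    rw [AddMonoidAlgebra.coeff_sum, Finsupp.finset_sum_apply]
    exact Finset.sum_eq_zero fun i _ => hD0 i (g i)
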